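/- For the sequences f, g of the Golomb-like system f(1) = 0, g(n) = f(n - f(n)) + 1, f(n) = g(n - g(n-1)): for all n ≥ 1, f(n) = ⌊√(n-1)⌋ and g(n) = ⌈(−1 + √(4n−3))/2⌉ (equivalently g(n) is the unique i ≥ 1 with i² − i + 1 ≤ n ≤ i² + i); in particular f(n) ~ √n and g(n) ~ √n as n → ∞. -/

import Mathlib

open Filter

private def FF (n : ℕ) : ℕ := Nat.sqrt (n - 1)
private def GG (n : ℕ) : ℕ := (Nat.sqrt (4 * n - 3) + 1) / 2

private lemma F_eq {i n : ℕ} (h1 : i ^ 2 + 1 ≤ n) (h2 : n ≤ i ^ 2 + 2 * i + 1) :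
    FF n = i := by
  unfold FF
  have hl : i ≤ Nat.sqrt (n - 1) := Nat.le_sqrt'.mpr (by omega)
  have hr : Nat.sqrt (n - 1) < i + 1 := Nat.sqrt_lt'.mpr (by ring_nf; omega)
  omega

private lemma F_spec {n : ℕ} (hn : 1 ≤ n) :
    FF n ^ 2 + 1 ≤ n ∧ n ≤ FF n ^ 2 + 2 * FF n + 1 := by
  have h1 := Nat.sqrt_le' (n - 1)
  have h2 := Nat.lt_succ_sqrt' (n - 1)
  rw [Nat.succ_eq_add_one] at h2
  unfold FF
  constructor
  · omega
  · have : (Nat.sqrt (n-1) + 1) ^ 2 = Nat.sqrt (n-1) ^ 2 + 2 * Nat.sqrt (n-1) + 1 := by ring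
    omega

private lemma G_eq {i n : ℕ} (hi : 1 ≤ i) (h1 : i ^ 2 + 1 ≤ n + i) (h2 : n ≤ i ^ 2 + i) :
    GG n = i := by
  unfold GG
  have key1 : (2 * i - 1) * (2 * i - 1) + 3 ≤ 4 * n := by
    have e : (2 * i - 1) * (2 * i - 1) + (4 * i) = 4 * i ^ 2 + 1 := by
      have h : 2 * i - 1 + 1 = 2 * i := by omega
      have := congrArg (fun x => x * x) h
      simp only [Nat.mul_succ, Nat.succ_mul] at this ⊢
      nlinarith [this]
    nlinarith [e, h1]
  have key2 : 4 * n < (2 * i + 1) * (2 * i + 1) + 3 := by nlinarith [h2]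
  have hs1 : 2 * i - 1 ≤ Nat.sqrt (4 * n - 3) := Nat.le_sqrt.mpr (by omega)
  have hs2 : Nat.sqrt (4 * n - 3) < 2 * i + 1 := Nat.sqrt_lt.mpr (by omega)
  omega

private lemma G_spec {n : ℕ} (hn : 1 ≤ n) :
    1 ≤ GG n ∧ GG n ^ 2 + 1 ≤ n + GG n ∧ n ≤ GG n ^ 2 + GG n := by
  have h1 : Nat.sqrt (4 * n - 3) * Nat.sqrt (4 * n - 3) ≤ 4 * n - 3 := Nat.sqrt_le _
  have h2 := Nat.lt_succ_sqrt (4 * n - 3)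
  set s := Nat.sqrt (4 * n - 3) with hs
  have hGn : GG n = (s + 1) / 2 := rfl
  set i := (s + 1) / 2 with hidef
  have hi1 : 2 * i ≤ s + 1 := by omega
  have hi2 : s + 1 ≤ 2 * i + 1 := by omega
  have hspos : 1 ≤ s := by
    by_contra h
    have : s = 0 := by omega
    rw [this] at h2
    simp [Nat.succ_mul] at h2
    omega
  rw [hGn]
  refine ⟨by omega, ?_, ?_⟩
  · -- from s*s ≤ 4n-3 and s ≥ 2i-1
    have hs' : 2 * i - 1 ≤ s := by omega
    have : (2 * i - 1) * (2 * i - 1) ≤ s * s := Nat.mul_le_mul hs' hs'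
    have h3 : (2 * i - 1) * (2 * i - 1) ≤ 4 * n - 3 := le_trans this h1
    have hi0 : 1 ≤ i := by omega
    have e : (2 * i - 1) * (2 * i - 1) + 4 * i = 4 * i ^ 2 + 1 := by
      have h : 2 * i - 1 + 1 = 2 * i := by omega
      have := congrArg (fun x => x * x) h
      nlinarith [this]
    nlinarith [h3, e, Nat.sub_add_cancel (show 3 ≤ 4 * n by omega)]
  · -- from 4n-3 < (s+1)^2 ≤ (2i+1)^2
    have : (s + 1) * (s + 1) ≤ (2 * i + 1) * (2 * i + 1) := Nat.mul_le_mul hi2 hi2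
    have h3 : 4 * n - 3 < (2 * i + 1) * (2 * i + 1) := lt_of_lt_of_le h2 this
    have h4 : 4 * n < (2 * i + 1) * (2 * i + 1) + 3 := by omega
    nlinarith [h4]

private lemma key1 {n : ℕ} (hn : 1 ≤ n) : GG n = FF (n - FF n) + 1 := by
  obtain ⟨hi1, hl, hr⟩ := G_spec hn
  set i := GG n with hi
  rcases le_or_gt (i ^ 2 + 1) n with hA | hB
  · -- n ∈ [i²+1, i²+i], F n = i
    have hFn : FF n = i := F_eq hA (by nlinarith)
    rw [hFn]
    have hji : i - 1 + 1 = i := by omega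
    have hsq : (i - 1) ^ 2 + 2 * (i - 1) + 1 = i ^ 2 := by
      have := congrArg (fun x => x ^ 2) hji
      nlinarith [this]
    have : FF (n - i) = i - 1 := F_eq (by omega) (by omega)
    omega
  · -- n ∈ [i²-i+1, i²], F n = i-1
    have hji : i - 1 + 1 = i := by omega
    have hsq : (i - 1) ^ 2 + 2 * (i - 1) + 1 = i ^ 2 := by
      have := congrArg (fun x => x ^ 2) hji
      nlinarith [this]
    have hii : i ≤ i ^ 2 := by nlinarith
    have hFn : FF n = i - 1 := F_eq (by omega) (by omega)
    rw [hFn]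
    have : FF (n - (i - 1)) = i - 1 := F_eq (by omega) (by omega)
    omega

private lemma key2 {n : ℕ} (hn : 2 ≤ n) : FF n = GG (n - GG (n - 1)) := by
  obtain ⟨hl, hr⟩ := F_spec (by omega : 1 ≤ n)
  set i := FF n with hi
  have hi1 : 1 ≤ i := by
    rcases Nat.eq_zero_or_pos i with h | h
    · rw [h] at hl hr; omega
    · exact h
  have hii : i ≤ i ^ 2 := by nlinarith
  rcases le_or_gt n (i ^ 2 + i + 1) with hA | hB
  · have hg1 : GG (n - 1) = i := G_eq hi1 (by omega) (by omega)
    rw [hg1]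
    exact (G_eq hi1 (by omega) (by omega)).symm
  · have hsq : (i + 1) ^ 2 = i ^ 2 + 2 * i + 1 := by ring
    have hg1 : GG (n - 1) = i + 1 := G_eq (by omega) (by omega) (by omega)
    rw [hg1]
    exact (G_eq hi1 (by omega) (by omega)).symm

private lemma G_uniq {i j n : ℕ} (hi : 1 ≤ i) (hj : 1 ≤ j)
    (h1 : i ^ 2 + 1 ≤ n + i) (h2 : n ≤ i ^ 2 + i)
    (h3 : j ^ 2 + 1 ≤ n + j) (h4 : n ≤ j ^ 2 + j) : i = j := by
  by_contra h
  rcases Nat.lt_or_ge i j with hlt | hge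
  · nlinarith [hlt, h2, h3]
  · have : j < i := by omega
    nlinarith [this, h4, h1]

theorem stmt_14 (f g : ℕ → ℕ)
    (hf1 : f 1 = 0)
    (hg : ∀ n, 1 ≤ n → g n = f (n - f n) + 1)
    (hf : ∀ n, 2 ≤ n → f n = g (n - g (n - 1))) :
    (∀ n, 1 ≤ n → f n = Nat.sqrt (n - 1)) ∧
    (∀ n, 1 ≤ n →
      1 ≤ g n ∧ (g n) ^ 2 - g n + 1 ≤ n ∧ n ≤ (g n) ^ 2 + g n ∧
      ∀ i : ℕ, 1 ≤ i → i ^ 2 - i + 1 ≤ n → n ≤ i ^ 2 + i → i = g n) ∧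
    Tendsto (fun n : ℕ => (f n : ℝ) / Real.sqrt n) atTop (nhds 1) ∧
    Tendsto (fun n : ℕ => (g n : ℝ) / Real.sqrt n) atTop (nhds 1) := by
  -- main induction
  have main : ∀ n, 1 ≤ n → f n = FF n ∧ g n = GG n := by
    intro n
    induction n using Nat.strong_induction_on with
    | _ n IH =>
      intro hn
      rcases eq_or_lt_of_le hn with h1 | h2
      · -- n = 1
        have hn1 : n = 1 := h1.symm
        subst hn1
        have hF1 : FF 1 = 0 := by unfold FF; simp
        have hG1 : GG 1 = 1 := by unfold GG; norm_num
        refine ⟨by rw [hf1, hF1], ?_⟩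
        rw [hg 1 le_rfl, hf1]
        simp [hf1, hG1]
      · -- n ≥ 2
        have hn2 : 2 ≤ n := h2
        have hn1 : 1 ≤ n - 1 := by omega
        have hIHg1 : g (n - 1) = GG (n - 1) := (IH (n - 1) (by omega) hn1).2
        obtain ⟨hGi1, hGl, hGr⟩ := G_spec hn1
        have hGle : GG (n - 1) ≤ n - 1 := by
          have hq : 2 * GG (n - 1) ≤ GG (n - 1) ^ 2 + 1 := by nlinarith
          omega
        have hm1 : 1 ≤ n - GG (n - 1) := by omega
        have hm2 : n - GG (n - 1) < n := by omega
        have hfn : f n = FF n := by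
          rw [hf n hn2, hIHg1, (IH _ hm2 hm1).2, ← key2 hn2]
        refine ⟨hfn, ?_⟩
        obtain ⟨hFl, hFr⟩ := F_spec (by omega : 1 ≤ n)
        have hF1 : 1 ≤ FF n := by
          rcases Nat.eq_zero_or_pos (FF n) with h | h
          · rw [h] at hFl hFr; omega
          · exact h
        have hFle : FF n ≤ n - 1 := by
          have hq : FF n ≤ FF n ^ 2 := by nlinarith [hF1]
          omega
        rw [hg n (by omega), hfn]
        have := (IH (n - FF n) (by omega) (by omega)).1
        rw [this, ← key1 (by omega : 1 ≤ n)]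
  have hfF : ∀ n, 1 ≤ n → f n = Nat.sqrt (n - 1) := fun n hn => (main n hn).1
  have hgG : ∀ n, 1 ≤ n → g n = GG n := fun n hn => (main n hn).2
  refine ⟨hfF, ?_, ?_, ?_⟩
  · intro n hn
    rw [hgG n hn]
    obtain ⟨hi1, hl, hr⟩ := G_spec hn
    have hii : GG n ≤ GG n ^ 2 := by nlinarith
    refine ⟨hi1, by omega, hr, ?_⟩
    intro i hi h1 h2
    have hii2 : i ≤ i ^ 2 := by nlinarith
    exact G_uniq hi hi1 (by omega) h2 (by omega) hr
  · -- f asymptotics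
    have hub : ∀ᶠ n : ℕ in atTop, (f n : ℝ) / Real.sqrt n ≤ 1 := by
      filter_upwards [eventually_ge_atTop 1] with n hn
      have hn0 : (0 : ℝ) < Real.sqrt n := Real.sqrt_pos.mpr (by positivity)
      rw [div_le_one hn0]
      rw [hfF n hn]
      calc ((Nat.sqrt (n-1) : ℕ) : ℝ) ≤ Real.sqrt ((n : ℕ) - 1 : ℕ) :=
            Real.nat_sqrt_le_real_sqrt
        _ ≤ Real.sqrt n := Real.sqrt_le_sqrt (by exact_mod_cast Nat.sub_le n 1)
    have hlb : ∀ᶠ n : ℕ in atTop, 1 - 1 / Real.sqrt n ≤ (f n : ℝ) / Real.sqrt n := by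
      filter_upwards [eventually_ge_atTop 1] with n hn
      have hn0 : (0 : ℝ) < Real.sqrt n := Real.sqrt_pos.mpr (by positivity)
      rw [le_div_iff₀ hn0]
      have key : Real.sqrt n ≤ (f n : ℝ) + 1 := by
        rw [hfF n hn]
        have h2 := Nat.lt_succ_sqrt' (n - 1)
        rw [Nat.succ_eq_add_one] at h2
        have hnn : n ≤ (Nat.sqrt (n - 1) + 1) ^ 2 := by omega
        have : Real.sqrt n ≤ Real.sqrt (((Nat.sqrt (n - 1) + 1) ^ 2 : ℕ) : ℝ) :=
          Real.sqrt_le_sqrt (by exact_mod_cast hnn)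
        rwa [show (((Nat.sqrt (n - 1) + 1) ^ 2 : ℕ) : ℝ)
              = ((Nat.sqrt (n - 1) : ℝ) + 1) ^ 2 by push_cast; ring,
            Real.sqrt_sq (by positivity)] at this
      have : (1 - 1 / Real.sqrt n) * Real.sqrt n = Real.sqrt n - 1 := by
        field_simp
      rw [this]
      linarith
    have hinv : Tendsto (fun n : ℕ => 1 / Real.sqrt n) atTop (nhds 0) := by
      have hsq : Tendsto (fun n : ℕ => Real.sqrt n) atTop atTop := by
        have h := (tendsto_rpow_atTop (by norm_num : (0:ℝ) < 1/2)).comp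
          tendsto_natCast_atTop_atTop (α := ℕ)
        exact h.congr fun n => (Real.sqrt_eq_rpow _).symm
      simpa [one_div, Pi.inv_def] using hsq.inv_tendsto_atTop
    have hL : Tendsto (fun n : ℕ => 1 - 1 / Real.sqrt n) atTop (nhds 1) := by
      simpa using tendsto_const_nhds.sub hinv
    exact tendsto_of_tendsto_of_tendsto_of_le_of_le' hL tendsto_const_nhds hlb hub
  · -- g asymptotics
    have hinv : Tendsto (fun n : ℕ => 1 / Real.sqrt n) atTop (nhds 0) := by
      have hsq : Tendsto (fun n : ℕ => Real.sqrt n) atTop atTop := by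
        have h := (tendsto_rpow_atTop (by norm_num : (0:ℝ) < 1/2)).comp
          tendsto_natCast_atTop_atTop (α := ℕ)
        exact h.congr fun n => (Real.sqrt_eq_rpow _).symm
      simpa [one_div, Pi.inv_def] using hsq.inv_tendsto_atTop
    have hL : Tendsto (fun n : ℕ => 1 - 1 / Real.sqrt n) atTop (nhds 1) := by
      simpa using tendsto_const_nhds.sub hinv
    have hU : Tendsto (fun n : ℕ => 1 + 1 / Real.sqrt n) atTop (nhds 1) := by
      simpa using tendsto_const_nhds.add hinv
    have key : ∀ᶠ n : ℕ in atTop,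
        (Real.sqrt n - 1 ≤ (g n : ℝ) ∧ (g n : ℝ) - 1 ≤ Real.sqrt n) := by
      filter_upwards [eventually_ge_atTop 1] with n hn
      rw [hgG n hn]
      obtain ⟨hi1, hl, hr⟩ := G_spec hn
      set i := GG n with hidef
      have hc1 : (i : ℝ) ^ 2 + 1 ≤ (n : ℝ) + i := by exact_mod_cast hl
      have hc2 : (n : ℝ) ≤ (i : ℝ) ^ 2 + i := by exact_mod_cast hr
      have hc3 : (1 : ℝ) ≤ i := by exact_mod_cast hi1
      constructor
      · -- √n ≤ i + 1
        have h1 : Real.sqrt n ≤ ((i : ℝ) + 1) := by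
          have : Real.sqrt n ≤ Real.sqrt (((i : ℝ) + 1) ^ 2) :=
            Real.sqrt_le_sqrt (by nlinarith)
          rwa [Real.sqrt_sq (by positivity)] at this
        linarith
      · -- i - 1 ≤ √n
        have h1 : (i : ℝ) - 1 ≤ Real.sqrt n :=
          Real.le_sqrt_of_sq_le (by nlinarith)
        linarith
    have hlb : ∀ᶠ n : ℕ in atTop, 1 - 1 / Real.sqrt n ≤ (g n : ℝ) / Real.sqrt n := by
      filter_upwards [key, eventually_ge_atTop 1] with n hk hn
      have hn0 : (0 : ℝ) < Real.sqrt n := Real.sqrt_pos.mpr (by positivity)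
      rw [le_div_iff₀ hn0]
      have : (1 - 1 / Real.sqrt n) * Real.sqrt n = Real.sqrt n - 1 := by field_simp
      rw [this]; exact hk.1
    have hub : ∀ᶠ n : ℕ in atTop, (g n : ℝ) / Real.sqrt n ≤ 1 + 1 / Real.sqrt n := by
      filter_upwards [key, eventually_ge_atTop 1] with n hk hn
      have hn0 : (0 : ℝ) < Real.sqrt n := Real.sqrt_pos.mpr (by positivity)
      rw [div_le_iff₀ hn0]
      have : (1 + 1 / Real.sqrt n) * Real.sqrt n = Real.sqrt n + 1 := by field_simp
      rw [this]; linarith [hk.2]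
    exact tendsto_of_tendsto_of_tendsto_of_le_of_le' hL hU hlb hub
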